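/- The algebra A_0^+ (multiplication e_1e_1 = e_2, e_1e_2 = −e_2, e_2e_1 = −e_1, e_2e_2 = e_1) is isomorphic to the algebra with multiplication f_1f_1 = 0, f_1f_2 = f_2, f_2f_1 = 0, f_2f_2 = −f_1, via the basis change f_1 = −(1/2)(e_1 + e_2), f_2 = (1/2)(e_1 − e_2). -/

import Mathlib

/-- Multiplication on ℝ² determined by structural constants `c`. -/
def amul (c : Fin 2 → Fin 2 → Fin 2 → ℝ) (x y : Fin 2 → ℝ) : Fin 2 → ℝ :=
  fun k => ∑ i : Fin 2, ∑ j : Fin 2, x i * y j * c i j k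

/-- Structural constants of A₀⁺ : e₁e₁ = e₂, e₁e₂ = -e₂, e₂e₁ = -e₁, e₂e₂ = e₁. -/
def cA0p : Fin 2 → Fin 2 → Fin 2 → ℝ :=
  ![![![0, 1], ![0, -1]], ![![-1, 0], ![1, 0]]]

/-- Structural constants of 𝒜₈(0,0): f₁f₁ = 0, f₁f₂ = f₂, f₂f₁ = 0, f₂f₂ = -f₁. -/
def cB : Fin 2 → Fin 2 → Fin 2 → ℝ :=
  ![![![0, 0], ![0, 1]], ![![0, 0], ![-1, 0]]]

noncomputable def M : Matrix (Fin 2) (Fin 2) ℝ := ![![-(1/2), 1/2], ![-(1/2), -(1/2)]]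
noncomputable def N : Matrix (Fin 2) (Fin 2) ℝ := ![![-1, -1], ![1, -1]]

noncomputable def F : (Fin 2 → ℝ) ≃ₗ[ℝ] (Fin 2 → ℝ) :=
  LinearEquiv.ofLinear (Matrix.toLin' M) (Matrix.toLin' N)
    (by
      apply LinearMap.ext; intro x
      funext k
      simp [Matrix.toLin'_apply, Matrix.mulVec, dotProduct,
        Fin.sum_univ_two]
      fin_cases k <;> simp [M, N] <;> ring)
    (by
      apply LinearMap.ext; intro x
      funext k
      simp [Matrix.toLin'_apply, Matrix.mulVec, dotProduct,
        Fin.sum_univ_two]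
      fin_cases k <;> simp [M, N] <;> ring)

/-- A₀⁺ is isomorphic to 𝒜₈(0,0) via the basis change
f₁ = -(1/2)(e₁ + e₂), f₂ = (1/2)(e₁ - e₂). -/
theorem stmt_15 :
    ∃ f : (Fin 2 → ℝ) ≃ₗ[ℝ] (Fin 2 → ℝ),
      f ![1, 0] = ![-(1/2), -(1/2)] ∧ f ![0, 1] = ![1/2, -(1/2)] ∧
      ∀ x y : Fin 2 → ℝ, f (amul cB x y) = amul cA0p (f x) (f y) := by
  refine ⟨F, ?_, ?_, ?_⟩
  · funext k
    fin_cases k <;>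
      simp [F, Matrix.toLin'_apply, Matrix.mulVec, dotProduct,
        Fin.sum_univ_two] <;> simp [M]
  · funext k
    fin_cases k <;>
      simp [F, Matrix.toLin'_apply, Matrix.mulVec, dotProduct,
        Fin.sum_univ_two] <;> simp [M]
  · intro x y
    funext k
    fin_cases k <;>
      · simp [F, amul, cA0p, cB, Matrix.toLin'_apply, Matrix.mulVec,
          dotProduct, Fin.sum_univ_two]
        simp [M]
        ring
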